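/- Let x ∈ relint(core(P)) and let F_1,…,F_t be exactly those facets of P with d_{F_i}(x) = μ(P)^{-1}, with primitive inner normals a_1,…,a_t. Then the cone positively spanned by a_1,…,a_t equals the orthogonal complement K(P)^⊥ of K(P). Moreover, if core(P) = {x}, then the set {y ∈ ℝ^n : d_{F_i}(y) ≥ 0 for all i = 1,…,t} is bounded, i.e., it is a rational polytope containing P. -/

import Mathlib

open scoped BigOperators Pointwise

noncomputable section

/-- Pairing `⟨a, x⟩ = ∑ aⱼ xⱼ` of an integer linear functional with a real point. -/
def ipair {n : ℕ} (a : Fin n → ℤ) (x : Fin n → ℝ) : ℝ := ∑ j, (a j : ℝ) * x j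

/-- An integer vector is primitive if it is nonzero and not a nontrivial integer
multiple of another integer vector. -/
def IsPrimitive {n : ℕ} (a : Fin n → ℤ) : Prop :=
  a ≠ 0 ∧ ∀ (k : ℤ) (b : Fin n → ℤ), a = k • b → IsUnit k

/-- The set of integer (lattice) points of `ℝⁿ`. -/
def IntPts (n : ℕ) : Set (Fin n → ℝ) := Set.range (fun z : Fin n → ℤ => fun j => (z j : ℝ))

/-- The dimension of a subset of `ℝⁿ` (the dimension of its affine hull). -/
def setDim {n : ℕ} (S : Set (Fin n → ℝ)) : ℕ := Module.finrank ℝ (vectorSpan ℝ S)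

/-- An irredundant facet description `P = {x : A x ≥ b}` of an `n`-dimensional
rational polytope: the rows `aᵢ` of `A` are primitive integer vectors, the right hand
sides are rational, `P` is bounded and `n`-dimensional, every inequality defines a facet
(a face of dimension `n-1`), and no inequality is repeated. -/
structure PolyDesc (n m : ℕ) : Type where
  hm : 0 < m
  A : Fin m → Fin n → ℤ
  b : Fin m → ℚ
  prim : ∀ i, IsPrimitive (A i)
  bounded : Bornology.IsBounded {x : Fin n → ℝ | ∀ i, (b i : ℝ) ≤ ipair (A i) x}
  fulldim : setDim {x : Fin n → ℝ | ∀ i, (b i : ℝ) ≤ ipair (A i) x} = n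
  facet_dim : ∀ i, setDim {x : Fin n → ℝ |
      (∀ j, (b j : ℝ) ≤ ipair (A j) x) ∧ ipair (A i) x = (b i : ℝ)} + 1 = n
  irredundant : Function.Injective (fun i => (A i, b i))

namespace PolyDesc

variable {n m : ℕ} (D : PolyDesc n m)

/-- The polytope `P` itself. -/
def pts : Set (Fin n → ℝ) := {x | ∀ i, (D.b i : ℝ) ≤ ipair (D.A i) x}

/-- Lattice distance `d_{Fᵢ}(x) = ⟨aᵢ, x⟩ - bᵢ` from (the hyperplane spanned by)
the `i`-th facet. -/
def dF (i : Fin m) (x : Fin n → ℝ) : ℝ := ipair (D.A i) x - (D.b i : ℝ)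

/-- Lattice distance `d_P(x) = minᵢ d_{Fᵢ}(x)` from the boundary of `P`. -/
def dist (x : Fin n → ℝ) : ℝ :=
  Finset.univ.inf'
    (Finset.univ_nonempty_iff.mpr (Fin.pos_iff_nonempty.mp D.hm))
    (fun i => D.dF i x)

/-- The adjoint polytope `P⁽ˢ⁾ = {x : d_P(x) ≥ s}`. -/
def adj (s : ℝ) : Set (Fin n → ℝ) := {x | s ≤ D.dist x}

/-- The `i`-th facet `Fᵢ` of `P`. -/
def facet (i : Fin m) : Set (Fin n → ℝ) := {x ∈ D.pts | ipair (D.A i) x = (D.b i : ℝ)}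

/-- The set `{s > 0 : P⁽ˢ⁾ ≠ ∅}`, whose supremum is `μ(P)⁻¹`. -/
def qcdInvSet : Set ℝ := {s : ℝ | 0 < s ∧ (D.adj s).Nonempty}

/-- `μ(P)⁻¹ = sup {s > 0 : P⁽ˢ⁾ ≠ ∅}`. -/
def qcdInv : ℝ := sSup D.qcdInvSet

/-- The ℚ-codegree `μ(P) = (sup {s > 0 : P⁽ˢ⁾ ≠ ∅})⁻¹`. -/
def qcd : ℝ := D.qcdInv⁻¹

/-- The core `core(P) = P^{(1/μ(P))}`. -/
def core : Set (Fin n → ℝ) := D.adj D.qcdInv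

/-- The codegree `cd(P) = min {k ∈ ℕ, k ≥ 1 : int(kP) ∩ ℤⁿ ≠ ∅}`. -/
def codeg : ℕ := sInf {k : ℕ | 0 < k ∧
  ∃ z : Fin n → ℤ, (fun j => (z j : ℝ)) ∈ interior ((k : ℝ) • D.pts)}

end PolyDesc

/-- The face of `S` on which the linear functional `u` is maximized. -/
def argFace {n : ℕ} (S : Set (Fin n → ℝ)) (u : Fin n → ℝ) : Set (Fin n → ℝ) :=
  {x ∈ S | ∀ y ∈ S, ∑ j, u j * y j ≤ ∑ j, u j * x j}

/-- `S` and `T` have the same normal fan: two linear functionals lie in the same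
(relatively open) cone of the normal fan of `S`, i.e. are maximized on the same face
of `S`, iff the same holds for `T`. -/
def SameNormalFan {n : ℕ} (S T : Set (Fin n → ℝ)) : Prop :=
  ∀ u v : Fin n → ℝ, (argFace S u = argFace S v ↔ argFace T u = argFace T v)

/-- The normal fan of `S` refines the normal fan of `T`. -/
def RefinesNormalFan {n : ℕ} (S T : Set (Fin n → ℝ)) : Prop :=
  ∀ u v : Fin n → ℝ, argFace S u = argFace S v → argFace T u = argFace T v

namespace PolyDesc
variable {n m : ℕ} (D : PolyDesc n m)

/-- `{s > 0 : N(P⁽ˢ⁾) = N(P)}`, whose supremum is `τ(P)⁻¹`. -/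
def nefInvSet : Set ℝ := {s : ℝ | 0 < s ∧ SameNormalFan (D.adj s) D.pts}

/-- `τ(P)⁻¹ = sup {s > 0 : N(P⁽ˢ⁾) = N(P)}`. -/
def nefInv : ℝ := sSup D.nefInvSet

/-- The nef value `τ(P)`. -/
def nefVal : ℝ := D.nefInv⁻¹

/-- The set of inequalities active at `x`; the normal cone of the minimal face of `P`
containing `x` is generated by `{aᵢ : i ∈ active x}`, and all cones of the normal fan
of `P` arise in this way. -/
def active (x : Fin n → ℝ) : Set (Fin m) := {i | ipair (D.A i) x = (D.b i : ℝ)}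

/-- The normal cone at the vertex `v` is ℚ-Gorenstein of index `r`, witnessed by the
primitive lattice point `u = u_σ` with `⟨aᵢ, u⟩ = r` for all active `i`. -/
def VertexQG (v : Fin n → ℝ) (u : Fin n → ℤ) (r : ℤ) : Prop :=
  IsPrimitive u ∧ 0 < r ∧ ∀ i ∈ D.active v, (∑ j, D.A i j * u j) = r

/-- The normal fan of `P` is ℚ-Gorenstein: every maximal cone (normal cone of a
vertex, i.e. of an extreme point) is ℚ-Gorenstein. -/
def QGorenstein : Prop := ∀ v ∈ Set.extremePoints ℝ D.pts, ∃ u r, D.VertexQG v u r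

end PolyDesc

/-- The point `v(s) = v + (s/r_σ) • u_σ`. -/
def vmove {n : ℕ} (v : Fin n → ℝ) (s : ℝ) (u : Fin n → ℤ) (r : ℤ) : Fin n → ℝ :=
  v + (s / (r : ℝ)) • (fun j => ((u j : ℝ)))

/-- The height of a point `y` in the cone generated by `{aᵢ : i ∈ I}`:
`ht(y) = max {∑ λᵢ : λᵢ ≥ 0, ∑ λᵢ aᵢ = y}`. -/
def coneHeight {n m : ℕ} (D : PolyDesc n m) (I : Set (Fin m)) (y : Fin n → ℝ) : ℝ :=
  sSup {t : ℝ | ∃ c : Fin m → ℝ, (∀ i, 0 ≤ c i) ∧ (∀ i ∉ I, c i = 0) ∧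
    (y = ∑ i, c i • (fun j => ((D.A i j : ℝ)))) ∧ t = ∑ i, c i}

/-- `P` is α-canonical: for every cone `σ` of the normal fan of `P` (the normal cone
of the minimal face containing a point `x ∈ P`, generated by `{aᵢ : i ∈ active x}`),
every nonzero lattice point of `σ` has height at least `α`. -/
def AlphaCanonical {n m : ℕ} (D : PolyDesc n m) (α : ℝ) : Prop :=
  ∀ x ∈ D.pts, ∀ z : Fin n → ℤ, z ≠ 0 →
    (∃ c : Fin m → ℝ, (∀ i, 0 ≤ c i) ∧ (∀ i ∉ D.active x, c i = 0) ∧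
      ((fun j => ((z j : ℝ))) = ∑ i, c i • (fun j => ((D.A i j : ℝ))))) →
    α ≤ coneHeight D (D.active x) (fun j => ((z j : ℝ)))

/-- `P` is a lattice polytope: the convex hull of finitely many integer points. -/
def IsLatticePoly {n : ℕ} (P : Set (Fin n → ℝ)) : Prop :=
  ∃ V : Finset (Fin n → ℤ),
    P = convexHull ℝ ((fun z : Fin n → ℤ => fun j => ((z j : ℝ))) '' (V : Set (Fin n → ℤ)))

/-- The `i`-th standard basis vector of `ℝᵗ`. -/
def stdBasisVec (t : ℕ) (i : Fin t) : Fin t → ℝ := fun j => if j = i then 1 else 0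

/-- The marking vectors of a Cayley sum: `0, e₁, …, e_t ∈ ℝᵗ`. -/
def cayleyVec (t : ℕ) : Fin (t + 1) → (Fin t → ℝ) :=
  fun j => if h : (j : ℕ) = 0 then 0 else stdBasisVec t ⟨(j : ℕ) - 1, by have := j.isLt; omega⟩

/-- The Cayley sum `Q₀ * ⋯ * Q_t = conv((Q₀ × {0}) ∪ (Q₁ × {e₁}) ∪ ⋯ ∪ (Q_t × {e_t}))`. -/
def cayleySum {k t : ℕ} (Q : Fin (t + 1) → Set (Fin k → ℝ)) :
    Set ((Fin k → ℝ) × (Fin t → ℝ)) :=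
  convexHull ℝ (⋃ j, (Q j) ×ˢ ({cayleyVec t j} : Set (Fin t → ℝ)))

/-- `P ⊆ ℝⁿ` is a Cayley polytope `P₀ * ⋯ * P_t` of length `t+1` of lattice polytopes
`Pⱼ ⊆ ℝᵏ` with `k + t = n`: some affine lattice isomorphism `ℤⁿ ≅ ℤᵏ × ℤᵗ`
identifies `P` with such a Cayley sum. -/
def IsCayley {n : ℕ} (P : Set (Fin n → ℝ)) (k t : ℕ) : Prop :=
  k + t = n ∧
  ∃ Q : Fin (t + 1) → Finset (Fin k → ℤ), (∀ j, (Q j).Nonempty) ∧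
  ∃ f : (Fin n → ℝ) ≃ᵃ[ℝ] (Fin k → ℝ) × (Fin t → ℝ),
    f '' IntPts n = (IntPts k) ×ˢ (IntPts t) ∧
    f '' P = cayleySum (fun j =>
      convexHull ℝ ((fun z : Fin k → ℤ => fun i => ((z i : ℝ))) '' (Q j : Set (Fin k → ℤ))))

/-- The unimodular simplex `Δₙ = conv(0, e₁, …, eₙ)`. -/
def unimodSimplex (n : ℕ) : Set (Fin n → ℝ) :=
  convexHull ℝ (insert (0 : Fin n → ℝ) (Set.range (stdBasisVec n)))

/-- Two subsets of `ℝⁿ` are unimodularly equivalent: an affine lattice automorphism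
maps one onto the other. -/
def UnimodEquiv {n : ℕ} (P P' : Set (Fin n → ℝ)) : Prop :=
  ∃ f : (Fin n → ℝ) ≃ᵃ[ℝ] (Fin n → ℝ), f '' IntPts n = IntPts n ∧ f '' P = P'

/-- The codegree `cd(P) = min {k ∈ ℕ, k ≥ 1 : int(kP) ∩ ℤⁿ ≠ ∅}` of a polytope given
as a set. -/
def codegS {n : ℕ} (P : Set (Fin n → ℝ)) : ℕ :=
  sInf {k : ℕ | 0 < k ∧ ∃ z : Fin n → ℤ, (fun j => (z j : ℝ)) ∈ interior ((k : ℝ) • P)}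

/-- `P` has lattice width one: some nonzero integer linear functional has minimum `c`
and maximum `c + 1` on `P`. -/
def HasLatticeWidthOne {n : ℕ} (P : Set (Fin n → ℝ)) : Prop :=
  ∃ u : Fin n → ℤ, u ≠ 0 ∧ ∃ c : ℤ,
    (∀ x ∈ P, (c : ℝ) ≤ ipair u x ∧ ipair u x ≤ (c : ℝ) + 1) ∧
    (∃ x ∈ P, ipair u x = (c : ℝ)) ∧ (∃ x ∈ P, ipair u x = (c : ℝ) + 1)

/-- `P` is a lattice pyramid: for some primitive `u`, `P` is the convex hull of a base
lying in the lattice hyperplane `{⟨u, ·⟩ = c}` and an apex at lattice distance one from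
it (this is equivalent to being unimodularly equivalent to
`conv((Q × {0}) ∪ {(0, …, 0, 1)})` for an `(n-1)`-dimensional lattice polytope `Q`). -/
def IsLatticePyramid {n : ℕ} (P : Set (Fin n → ℝ)) : Prop :=
  ∃ u : Fin n → ℤ, IsPrimitive u ∧ ∃ c : ℤ, ∃ apex ∈ P,
    ipair u apex = (c : ℝ) + 1 ∧
    P = convexHull ℝ ({x ∈ P | ipair u x = (c : ℝ)} ∪ {apex})

/-- `F` is a facet of `S`: an exposed face of dimension `dim S - 1`. -/
def IsFacetOf {n : ℕ} (F S : Set (Fin n → ℝ)) : Prop :=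
  IsExposed ℝ S F ∧ F.Nonempty ∧ setDim F + 1 = setDim S

/-- Conic Carathéodory: a nonnegative combination can be rewritten with linearly
independent support. -/
lemma cara_aux' {m : ℕ} {E : Type*} [AddCommGroup E] [Module ℝ E] (a : Fin m → E) :
    ∀ (N : ℕ) (c : Fin m → ℝ), (Finset.univ.filter fun i => c i ≠ 0).card ≤ N →
    (∀ i, 0 ≤ c i) →
    ∃ c' : Fin m → ℝ, (∀ i, 0 ≤ c' i) ∧ (∀ i, c' i ≠ 0 → c i ≠ 0) ∧
      (∑ i, c' i • a i = ∑ i, c i • a i) ∧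
      LinearIndependent ℝ (fun i : {i // c' i ≠ 0} => a i) := by
  classical
  intro N
  induction N with
  | zero =>
    intro c hcard hc
    have hzero : ∀ i, c i = 0 := by
      intro i
      by_contra h
      have hmem : i ∈ Finset.univ.filter fun i => c i ≠ 0 := by simp [h]
      have := Finset.card_pos.mpr ⟨i, hmem⟩
      omega
    refine ⟨c, hc, fun i h => h, rfl, ?_⟩
    have : IsEmpty {i // c i ≠ 0} := ⟨fun ⟨i, hi⟩ => hi (hzero i)⟩
    exact linearIndependent_empty_type
  | succ N ih =>
    intro c hcard hc
    by_cases hli : LinearIndependent ℝ (fun i : {i // c i ≠ 0} => a i)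
    · exact ⟨c, hc, fun i h => h, rfl, hli⟩
    · rw [Fintype.linearIndependent_iff] at hli
      push_neg at hli
      obtain ⟨g, hg0, i₁, hi₁⟩ := hli
      have hex : ∃ g : {i // c i ≠ 0} → ℝ, (∑ i, g i • a ↑i = 0) ∧ ∃ i, 0 < g i := by
        rcases lt_or_gt_of_ne hi₁ with h | h
        · refine ⟨-g, ?_, i₁, by simpa using h⟩
          simp only [Pi.neg_apply, neg_smul, Finset.sum_neg_distrib, hg0, neg_zero]
        · exact ⟨g, hg0, i₁, h⟩
      obtain ⟨g, hg0, i₂, hi₂⟩ := hex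
      set gh : Fin m → ℝ := fun i => if h : c i ≠ 0 then g ⟨i, h⟩ else 0 with hgh
      have hghsum : ∑ i, gh i • a i = 0 := by
      -- sum over Fin m equals sum over subtype
        have h1 : ∑ i, gh i • a i
            = ∑ i ∈ Finset.univ.filter (fun i => c i ≠ 0), gh i • a i := by
          refine (Finset.sum_subset (Finset.filter_subset _ _) ?_).symm
          intro i _ hi
          simp only [Finset.mem_filter, Finset.mem_univ, true_and] at hi
          push_neg at hi
          simp [hgh, hi]
        have h2 : ∑ i ∈ Finset.univ.filter (fun i => c i ≠ 0), gh i • a i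
            = ∑ i : {i // c i ≠ 0}, gh ↑i • a ↑i :=
          Finset.sum_subtype _ (by simp) _
        rw [h1, h2, ← hg0]
        refine Finset.sum_congr rfl fun i _ => ?_
        simp [hgh, i.2]
      -- the set of indices where gh is positive
      have hi₂' : gh i₂ = g i₂ := by simp [hgh, i₂.2]
      have hTne : (Finset.univ.filter fun i => 0 < gh i).Nonempty :=
        ⟨i₂, by simp [hi₂', hi₂]⟩
      set T := Finset.univ.filter fun i => 0 < gh i with hT
      set t := T.inf' hTne (fun i => c i / gh i) with ht
      obtain ⟨i₀, hi₀T, hi₀⟩ := Finset.exists_mem_eq_inf' hTne (fun i => c i / gh i)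
      have hgi₀ : 0 < gh i₀ := by
        simp only [hT, Finset.mem_filter] at hi₀T; exact hi₀T.2
      have hci₀ : c i₀ ≠ 0 := by
        intro h
        have : gh i₀ = 0 := by simp [hgh, h]
        simp [this] at hgi₀
      have htpos : 0 ≤ t := by
        rw [ht]
        apply Finset.le_inf'
        intro i hiT
        simp only [hT, Finset.mem_filter] at hiT
        exact div_nonneg (hc i) hiT.2.le
      set c'' : Fin m → ℝ := fun i => c i - t * gh i with hc''
      have hc''nonneg : ∀ i, 0 ≤ c'' i := by
        intro i
        by_cases hig : 0 < gh i
        · have hle : t ≤ c i / gh i := Finset.inf'_le _ (by simp [hT, hig])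
          have := (le_div_iff₀ hig).mp hle
          simp only [hc'']
          linarith
        · push_neg at hig
          have : t * gh i ≤ 0 := mul_nonpos_of_nonneg_of_nonpos htpos hig
          simp only [hc'']
          linarith [hc i]
      have hc''supp : ∀ i, c'' i ≠ 0 → c i ≠ 0 := by
        intro i h hci
        apply h
        have : gh i = 0 := by simp [hgh, hci]
        simp [hc'', this, hci]
      have hc''i₀ : c'' i₀ = 0 := by
        have hne : gh i₀ ≠ 0 := ne_of_gt hgi₀
        show c i₀ - t * gh i₀ = 0
        rw [ht, hi₀]
        field_simp
        ring
      have hcard' : (Finset.univ.filter fun i => c'' i ≠ 0).card ≤ N := by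
        have hsub : (Finset.univ.filter fun i => c'' i ≠ 0)
            ⊆ (Finset.univ.filter fun i => c i ≠ 0).erase i₀ := by
          intro i hi
          simp only [Finset.mem_filter, Finset.mem_univ, true_and] at hi
          refine Finset.mem_erase.mpr ⟨?_, by simp [hc''supp i hi]⟩
          rintro rfl; exact hi hc''i₀
        have h1 := Finset.card_le_card hsub
        have h2 : i₀ ∈ Finset.univ.filter fun i => c i ≠ 0 := by simp [hci₀]
        rw [Finset.card_erase_of_mem h2] at h1
        omega
      have hsum'' : ∑ i, c'' i • a i = ∑ i, c i • a i := by
        simp only [hc'', sub_smul, Finset.sum_sub_distrib, mul_smul]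
        rw [← Finset.smul_sum, hghsum, smul_zero, sub_zero]
      obtain ⟨c', h1, h2, h3, h4⟩ := ih c'' hcard' hc''nonneg
      exact ⟨c', h1, fun i hi => hc''supp i (h2 i hi), h3.trans hsum'', h4⟩

/-- A finitely generated cone is closed. -/
lemma cone_isClosed' {m : ℕ} {E : Type*} [NormedAddCommGroup E] [NormedSpace ℝ E]
    (a : Fin m → E) (I : Set (Fin m)) :
    IsClosed {y : E | ∃ c : Fin m → ℝ, (∀ i, 0 ≤ c i) ∧ (∀ i ∉ I, c i = 0) ∧
      y = ∑ i, c i • a i} := by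
  classical
  -- the cone indexed by a finset S
  set K : Finset (Fin m) → Set E := fun S =>
    {y : E | ∃ c : Fin m → ℝ, (∀ i, 0 ≤ c i) ∧ (∀ i, c i ≠ 0 → i ∈ S) ∧
      y = ∑ i, c i • a i} with hK
  have hunion : {y : E | ∃ c : Fin m → ℝ, (∀ i, 0 ≤ c i) ∧ (∀ i ∉ I, c i = 0) ∧
      y = ∑ i, c i • a i} =
      ⋃ (S : Finset (Fin m)), ⋃ (_ : (↑S ⊆ I) ∧
        LinearIndependent ℝ (fun i : S => a ↑i)), K S := by
    ext y
    simp only [Set.mem_setOf_eq, Set.mem_iUnion]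
    constructor
    · rintro ⟨c, hc0, hcI, rfl⟩
      obtain ⟨c', h1, h2, h3, h4⟩ := cara_aux' a _ c le_rfl hc0
      refine ⟨Finset.univ.filter fun i => c' i ≠ 0, ⟨?_, ?_⟩, c', h1, ?_, h3.symm⟩
      · intro i hi
        simp only [Finset.coe_filter, Set.mem_setOf_eq, Finset.mem_univ, true_and] at hi
        by_contra hiI
        exact (h2 i hi) (hcI i hiI)
      · -- linear independence transfers along the equiv of subtypes
        refine (linearIndependent_equiv'
          (Equiv.subtypeEquivRight (q := fun i => i ∈ Finset.univ.filter fun i => c' i ≠ 0)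
            (by simp)) ?_).mp h4
        funext i
        simp [Equiv.subtypeEquivRight]; rfl
      · intro i hi
        simp [hi]
    · rintro ⟨S, ⟨hSI, _⟩, c, hc0, hcS, rfl⟩
      exact ⟨c, hc0, fun i hi => by
        by_contra h
        exact hi (hSI (hcS i h)), rfl⟩
  rw [hunion]
  apply isClosed_iUnion_of_finite
  intro S
  by_cases hS : (↑S ⊆ I) ∧ LinearIndependent ℝ (fun i : S => a ↑i)
  · rw [Set.iUnion_eq_if, if_pos hS]
    -- K S is the image of the nonnegative orthant under an injective linear map
    set L : (S → ℝ) →ₗ[ℝ] E := Fintype.linearCombination ℝ (fun i : S => a ↑i) with hL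
    have hLapp : ∀ d : S → ℝ, L d = ∑ i : S, d i • a ↑i := fun d => by
      simp [hL, Fintype.linearCombination_apply]
    have hker : LinearMap.ker L = ⊥ := by
      rw [LinearMap.ker_eq_bot']
      intro d hd
      rw [hLapp] at hd
      exact funext (Fintype.linearIndependent_iff.mp hS.2 d hd)
    have himg : K S = L '' {d : S → ℝ | ∀ i, 0 ≤ d i} := by
      ext y
      simp only [hK, Set.mem_setOf_eq, Set.mem_image]
      constructor
      · rintro ⟨c, hc0, hcS, rfl⟩
        refine ⟨fun i => c ↑i, fun i => hc0 _, ?_⟩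
        rw [hLapp, Finset.sum_coe_sort S (fun i => c i • a i)]
        refine Finset.sum_subset S.subset_univ ?_
        intro i _ hi
        have : c i = 0 := by
          by_contra h
          exact hi (hcS i h)
        simp [this]
      · rintro ⟨d, hd0, rfl⟩
        refine ⟨fun i => if h : i ∈ S then d ⟨i, h⟩ else 0, ?_, ?_, ?_⟩
        · intro i
          by_cases h : i ∈ S <;> simp [h, hd0]
        · intro i hi
          by_cases h : i ∈ S
          · exact h
          · simp [h] at hi
        · rw [hLapp]
          have h1 : ∑ i : Fin m, (fun i => if h : i ∈ S then d ⟨i, h⟩ else 0) i • a i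
              = ∑ i ∈ S, (if h : i ∈ S then d ⟨i, h⟩ else 0) • a i := by
            refine (Finset.sum_subset S.subset_univ ?_).symm
            intro i _ hi
            simp [hi]
          rw [h1, ← Finset.sum_coe_sort S
            (fun i => (if h : i ∈ S then d ⟨i, h⟩ else 0) • a i)]
          exact Finset.sum_congr rfl fun i _ => by simp [i.2]
    rw [himg]
    have hclosed : IsClosed {d : S → ℝ | ∀ i, 0 ≤ d i} := by
      have : {d : S → ℝ | ∀ i, 0 ≤ d i} = ⋂ i, {d : S → ℝ | 0 ≤ d i} := by
        ext d; simp
      rw [this]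
      exact isClosed_iInter fun i =>
        isClosed_le continuous_const (continuous_apply i)
    exact (L.isClosedEmbedding_of_injective hker).isClosedMap _ hclosed
  · simp [hS]

/-- From a point in the intrinsic interior, one can move a bit past it away from any
point of the set and stay in the set. -/
lemma relint_extend' {n : ℕ} {s : Set (Fin n → ℝ)} {x p : Fin n → ℝ}
    (hx : x ∈ intrinsicInterior ℝ s) (hp : p ∈ s) :
    ∃ ε : ℝ, 0 < ε ∧ x + ε • (x - p) ∈ s := by
  rw [intrinsicInterior] at hx
  obtain ⟨x', hx', hxx⟩ := hx
  rw [mem_interior_iff_mem_nhds, mem_nhds_subtype] at hx'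
  obtain ⟨W, hW, hWs⟩ := hx'
  obtain ⟨δ, hδ, hball⟩ := Metric.mem_nhds_iff.mp hW
  set ε : ℝ := δ / (2 * (‖x - p‖ + 1)) with hε
  have hnorm : (0:ℝ) < ‖x - p‖ + 1 := by positivity
  have hεpos : 0 < ε := by positivity
  refine ⟨ε, hεpos, ?_⟩
  set q : Fin n → ℝ := x + ε • (x - p) with hq
  have hq_span : q ∈ affineSpan ℝ s := by
    have hxs : x ∈ affineSpan ℝ s := hxx ▸ x'.2
    have hps : p ∈ affineSpan ℝ s := subset_affineSpan ℝ s hp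
    have := AffineSubspace.smul_vsub_vadd_mem (affineSpan ℝ s) ε hxs hps hxs
    simpa [hq, vsub_eq_sub, vadd_eq_add, add_comm] using this
  have hqW : q ∈ W := by
    apply hball
    rw [Metric.mem_ball, dist_eq_norm]
    have h0 : q - x = ε • (x - p) := by
      rw [hq]; abel
    rw [hxx, h0, norm_smul]
    simp only [Real.norm_eq_abs, abs_of_pos hεpos]
    have h1 : ε * ‖x - p‖ < ε * (‖x - p‖ + 1) := by
      apply mul_lt_mul_of_pos_left _ hεpos
      linarith
    have h2 : ε * (‖x - p‖ + 1) = δ / 2 := by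
      rw [hε]; field_simp
    calc ε * ‖x - p‖ < ε * (‖x - p‖ + 1) := h1
      _ = δ / 2 := h2
      _ < δ := by linarith
  exact hWs (by exact hqW : (⟨q, hq_span⟩ : affineSpan ℝ s) ∈ Subtype.val ⁻¹' W)

/-- Let `x ∈ relint(core(P))` and let `I = {i : d_{Fᵢ}(x) = μ(P)⁻¹}`
index exactly the facets of `P` at lattice distance `μ(P)⁻¹` from `x`. Then the cone
positively spanned by the corresponding primitive inner normals `aᵢ (i ∈ I)` equals
the orthogonal complement `K(P)^⊥` of the linear space `K(P)` parallel to
`aff(core(P))`. Moreover, if `core(P) = {x}`, then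
`{y : d_{Fᵢ}(y) ≥ 0 for all i ∈ I}` is bounded — a rational polytope containing `P`. -/
theorem statement7 {n m : ℕ} (D : PolyDesc n m) (x : Fin n → ℝ)
    (hx : x ∈ intrinsicInterior ℝ D.core)
    (I : Set (Fin m)) (hI : I = {i | D.dF i x = D.qcdInv}) :
    {y : Fin n → ℝ | ∃ c : Fin m → ℝ, (∀ i, 0 ≤ c i) ∧ (∀ i ∉ I, c i = 0) ∧
        y = ∑ i, c i • (fun j => ((D.A i j : ℝ)))} =
      {y : Fin n → ℝ | ∀ v ∈ vectorSpan ℝ D.core, ∑ j, y j * v j = 0} ∧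
    (D.core = {x} →
      Bornology.IsBounded {y : Fin n → ℝ | ∀ i ∈ I, 0 ≤ D.dF i y} ∧
      D.pts ⊆ {y : Fin n → ℝ | ∀ i ∈ I, 0 ≤ D.dF i y}) := by
  classical
  have hne : (Finset.univ : Finset (Fin m)).Nonempty :=
    Finset.univ_nonempty_iff.mpr (Fin.pos_iff_nonempty.mp D.hm)
  set a : Fin m → (Fin n → ℝ) := fun i => fun j => (D.A i j : ℝ) with ha
  -- membership in the core
  have hcore_mem : ∀ p, p ∈ D.core ↔ ∀ i, D.qcdInv ≤ D.dF i p := by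
    intro p
    simp only [PolyDesc.core, PolyDesc.adj, PolyDesc.dist, Set.mem_setOf_eq,
      Finset.le_inf'_iff, Finset.mem_univ, true_implies]
  have hxc : x ∈ D.core := intrinsicInterior_subset hx
  -- linearity of ipair
  have hip_addsmul : ∀ (z : Fin n → ℤ) (u v : Fin n → ℝ) (t : ℝ),
      ipair z (u + t • v) = ipair z u + t * ipair z v := by
    intro z u v t
    simp only [ipair, Pi.add_apply, Pi.smul_apply, smul_eq_mul, Finset.mul_sum]
    rw [← Finset.sum_add_distrib]
    exact Finset.sum_congr rfl fun j _ => by ring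
  -- the distances to facets indexed by I are constant on the core
  have hconst : ∀ i ∈ I, ∀ p ∈ D.core, D.dF i p = D.qcdInv := by
    intro i hi p hp
    rw [hI] at hi
    have hxi : D.dF i x = D.qcdInv := hi
    have hge : D.qcdInv ≤ D.dF i p := (hcore_mem p).mp hp i
    obtain ⟨ε, hε, hqc⟩ := relint_extend' hx hp
    have hq := (hcore_mem _).mp hqc i
    have hcomp : D.dF i (x + ε • (x - p)) = D.dF i x + ε * (D.dF i x - D.dF i p) := by
      simp only [PolyDesc.dF, hip_addsmul]
      have : ipair (D.A i) (x - p) = ipair (D.A i) x - ipair (D.A i) p := by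
        simp only [ipair, Pi.sub_apply, mul_sub, Finset.sum_sub_distrib]
      rw [this]; ring
    rw [hcomp, hxi] at hq
    have h2 : D.dF i p ≤ D.qcdInv := by nlinarith
    linarith
  -- normals indexed by I are orthogonal to the span of the core
  have hker : ∀ i ∈ I, ∀ v ∈ vectorSpan ℝ D.core, ∑ j, (D.A i j : ℝ) * v j = 0 := by
    intro i hi
    set ℓ : (Fin n → ℝ) →ₗ[ℝ] ℝ :=
      { toFun := fun v => ∑ j, (D.A i j : ℝ) * v j
        map_add' := fun u v => by
          simp only [Pi.add_apply, mul_add, Finset.sum_add_distrib]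
        map_smul' := fun t v => by
          simp only [Pi.smul_apply, smul_eq_mul, RingHom.id_apply, Finset.mul_sum]
          exact Finset.sum_congr rfl fun j _ => by ring } with hℓ
    have hle : vectorSpan ℝ D.core ≤ LinearMap.ker ℓ := by
      rw [vectorSpan_def, Submodule.span_le]
      rintro v ⟨p, hp, q, hq, rfl⟩
      have h1 := hconst i hi p hp
      have h2 := hconst i hi q hq
      simp only [SetLike.mem_coe, LinearMap.mem_ker]
      have : ℓ (p -ᵥ q) = ipair (D.A i) p - ipair (D.A i) q := by
        simp only [hℓ, LinearMap.coe_mk, AddHom.coe_mk, vsub_eq_sub, Pi.sub_apply,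
          mul_sub, Finset.sum_sub_distrib, ipair]
      rw [this]
      have e1 : ipair (D.A i) p = D.qcdInv + (D.b i : ℝ) := by
        have := h1; simp only [PolyDesc.dF] at this; linarith
      have e2 : ipair (D.A i) q = D.qcdInv + (D.b i : ℝ) := by
        have := h2; simp only [PolyDesc.dF] at this; linarith
      rw [e1, e2]; ring
    intro v hv
    exact hle hv
  -- the main set equality
  have hmain : {y : Fin n → ℝ | ∃ c : Fin m → ℝ, (∀ i, 0 ≤ c i) ∧ (∀ i ∉ I, c i = 0) ∧
        y = ∑ i, c i • (fun j => ((D.A i j : ℝ)))} =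
      {y : Fin n → ℝ | ∀ v ∈ vectorSpan ℝ D.core, ∑ j, y j * v j = 0} := by
    ext y
    simp only [Set.mem_setOf_eq]
    constructor
    · rintro ⟨c, hc0, hcI, rfl⟩ v hv
      have happ : ∀ j, (∑ i, c i • (fun j' => ((D.A i j' : ℝ)))) j
          = ∑ i, c i * (D.A i j : ℝ) := by
        intro j
        simp [Finset.sum_apply]
      calc ∑ j, (∑ i, c i • (fun j' => ((D.A i j' : ℝ)))) j * v j
          = ∑ j, ∑ i, c i * (D.A i j : ℝ) * v j := by
            refine Finset.sum_congr rfl fun j _ => ?_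
            rw [happ, Finset.sum_mul]
        _ = ∑ i, ∑ j, c i * (D.A i j : ℝ) * v j := Finset.sum_comm
        _ = ∑ i, c i * ∑ j, (D.A i j : ℝ) * v j := by
            refine Finset.sum_congr rfl fun i _ => ?_
            rw [Finset.mul_sum]
            exact Finset.sum_congr rfl fun j _ => by ring
        _ = 0 := by
            refine Finset.sum_eq_zero fun i _ => ?_
            by_cases hiI : i ∈ I
            · rw [hker i hiI v hv, mul_zero]
            · rw [hcI i hiI, zero_mul]
    · intro hy
      by_contra hyC
      -- move to the Euclidean space to use the separation theorem
      set φ : (Fin n → ℝ) ≃ₗ[ℝ] EuclideanSpace ℝ (Fin n) :=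
        (WithLp.linearEquiv 2 ℝ (Fin n → ℝ)).symm with hφ
      have hinner : ∀ u v : Fin n → ℝ, (inner ℝ (φ u) (φ v) : ℝ) = ∑ j, u j * v j := by
        intro u v
        simp [hφ, PiLp.inner_apply, RCLike.inner_apply, WithLp.linearEquiv]
        exact Finset.sum_congr rfl fun j _ => mul_comm _ _
      set aE : Fin m → EuclideanSpace ℝ (Fin n) := fun i => φ (a i) with haE
      set K : ConvexCone ℝ (EuclideanSpace ℝ (Fin n)) :=
        { carrier := {z | ∃ c : Fin m → ℝ, (∀ i, 0 ≤ c i) ∧ (∀ i ∉ I, c i = 0) ∧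
            z = ∑ i, c i • aE i}
          smul_mem' := by
            rintro t ht z ⟨c, h0, h1, rfl⟩
            refine ⟨fun i => t * c i, fun i => mul_nonneg ht.le (h0 i),
              fun i hi => by show t * c i = 0; rw [h1 i hi, mul_zero], ?_⟩
            rw [Finset.smul_sum]
            refine Finset.sum_congr rfl fun i _ => ?_
            show t • c i • aE i = (t * c i) • aE i
            rw [smul_smul]
          add_mem' := by
            rintro z ⟨c, h0, h1, rfl⟩ z' ⟨c', h0', h1', rfl⟩
            refine ⟨fun i => c i + c' i, fun i => add_nonneg (h0 i) (h0' i),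
              fun i hi => by show c i + c' i = 0; rw [h1 i hi, h1' i hi, add_zero], ?_⟩
            rw [← Finset.sum_add_distrib]
            refine Finset.sum_congr rfl fun i _ => ?_
            show c i • aE i + c' i • aE i = (c i + c' i) • aE i
            rw [add_smul] }
        with hK
      have hKne : (K : Set (EuclideanSpace ℝ (Fin n))).Nonempty :=
        ⟨0, ⟨0, fun i => le_refl 0, fun i _ => rfl, by simp⟩⟩
      have hKclosed : IsClosed (K : Set (EuclideanSpace ℝ (Fin n))) :=
        cone_isClosed' aE I
      have hyK : φ y ∉ K := by
        rintro ⟨c, h0, h1, heq⟩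
        apply hyC
        refine ⟨c, h0, h1, ?_⟩
        apply φ.injective
        rw [heq, map_sum]
        exact Finset.sum_congr rfl fun i _ => by rw [map_smul]
      obtain ⟨w, hw1, hw2⟩ := ProperCone.hyperplane_separation'
        (⟨K.toPointedCone (ConvexCone.Pointed.of_nonempty_of_isClosed hKne hKclosed), hKclosed⟩ :
          ProperCone ℝ (EuclideanSpace ℝ (Fin n))) (x₀ := φ y) hyK
      rw [real_inner_comm] at hw2
      set wv : Fin n → ℝ := φ.symm w with hwv
      have hwφ : φ wv = w := φ.apply_symm_apply w
      have hiw : ∀ i ∈ I, 0 ≤ ∑ j, (D.A i j : ℝ) * wv j := by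
        intro i hiI
        have hmem : aE i ∈ K := by
          refine ⟨fun k => if k = i then 1 else 0, ?_, ?_, ?_⟩
          · intro k
            show (0:ℝ) ≤ if k = i then 1 else 0
            split <;> norm_num
          · intro k hk
            show (if k = i then (1:ℝ) else 0) = 0
            rw [if_neg]
            rintro rfl; exact absurd hiI hk
          · show aE i = ∑ k, (if k = i then (1:ℝ) else 0) • aE k
            simp [ite_smul, Finset.sum_ite_eq']
        have := hw1 _ hmem
        rw [← hwφ] at this
        rwa [hinner (a i) wv] at this
      have hw2' : ∑ j, wv j * y j < 0 := by
        have := hw2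
        rw [← hwφ] at this
        rwa [hinner wv y] at this
      -- choose the step size
      set t : ℝ := Finset.univ.inf' hne (fun i => if i ∈ I then 1 else
        (D.dF i x - D.qcdInv) / (1 + |∑ j, (D.A i j : ℝ) * wv j|)) with htdef
      have hgtq : ∀ i, i ∉ I → D.qcdInv < D.dF i x := by
        intro i hiI
        have h1 : D.qcdInv ≤ D.dF i x := (hcore_mem x).mp hxc i
        have h2 : D.dF i x ≠ D.qcdInv := by
          intro h; exact hiI (hI ▸ h)
        exact lt_of_le_of_ne h1 (Ne.symm h2)
      have htpos : 0 < t := by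
        rw [htdef, Finset.lt_inf'_iff]
        intro i _
        by_cases hiI : i ∈ I
        · rw [if_pos hiI]; norm_num
        · rw [if_neg hiI]
          have := hgtq i hiI
          have habs : (0:ℝ) < 1 + |∑ j, (D.A i j : ℝ) * wv j| := by positivity
          exact div_pos (by linarith) habs
      have hqcore : x + t • wv ∈ D.core := by
        rw [hcore_mem]
        intro i
        have hcomp : D.dF i (x + t • wv) = D.dF i x + t * ∑ j, (D.A i j : ℝ) * wv j := by
          simp only [PolyDesc.dF]
          rw [hip_addsmul]
          simp only [ipair]
          ring
        rw [hcomp]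
        by_cases hiI : i ∈ I
        · have h1 : D.dF i x = D.qcdInv := by rw [hI] at hiI; exact hiI
          have h2 : 0 ≤ t * ∑ j, (D.A i j : ℝ) * wv j :=
            mul_nonneg htpos.le (hiw i hiI)
          linarith
        · set γ : ℝ := ∑ j, (D.A i j : ℝ) * wv j with hγ
          have habs : (0:ℝ) < 1 + |γ| := by positivity
          have hle : t ≤ (D.dF i x - D.qcdInv) / (1 + |γ|) := by
            have := Finset.inf'_le (b := i)
              (fun i => if i ∈ I then 1 else
                (D.dF i x - D.qcdInv) / (1 + |∑ j, (D.A i j : ℝ) * wv j|))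
              (Finset.mem_univ i)
            rwa [if_neg hiI] at this
          have hγle : -|γ| ≤ γ := neg_abs_le γ
          have h3 : t * |γ| ≤ (D.dF i x - D.qcdInv) / (1 + |γ|) * |γ| :=
            mul_le_mul_of_nonneg_right hle (abs_nonneg γ)
          have h4 : (D.dF i x - D.qcdInv) / (1 + |γ|) * (1 + |γ|) = D.dF i x - D.qcdInv := by
            field_simp
          have h5 : (D.dF i x - D.qcdInv) / (1 + |γ|) * |γ|
              ≤ (D.dF i x - D.qcdInv) / (1 + |γ|) * (1 + |γ|) := by
            apply mul_le_mul_of_nonneg_left (by linarith)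
            have hgt := hgtq i hiI
            apply div_nonneg (by linarith) (by positivity)
          have h6 : -(t * |γ|) ≤ t * γ := by
            have := mul_le_mul_of_nonneg_left hγle htpos.le
            calc -(t * |γ|) = t * (-|γ|) := by ring
              _ ≤ t * γ := this
          linarith
      -- derive the contradiction
      have hvs : (x + t • wv) -ᵥ x ∈ vectorSpan ℝ D.core :=
        vsub_mem_vectorSpan ℝ hqcore hxc
      have heq2 : (x + t • wv) -ᵥ x = t • wv := by
        simp [vsub_eq_sub]
      rw [heq2] at hvs
      have := hy (t • wv) hvs
      have hzero : t * ∑ j, y j * wv j = 0 := by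
        rw [Finset.mul_sum]
        rw [← this]
        exact Finset.sum_congr rfl fun j _ => by simp [Pi.smul_apply]; ring
      have : ∑ j, y j * wv j = 0 := by
        rcases mul_eq_zero.mp hzero with h | h
        · exact absurd h (ne_of_gt htpos)
        · exact h
      have : ∑ j, wv j * y j = 0 := by
        rw [← this]
        exact Finset.sum_congr rfl fun j _ => mul_comm _ _
      linarith
  refine ⟨hmain, fun hcoreq => ?_⟩
  -- every vector is a nonnegative combination of the active normals
  have hall : ∀ y : Fin n → ℝ, ∃ c : Fin m → ℝ, (∀ i, 0 ≤ c i) ∧ (∀ i ∉ I, c i = 0) ∧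
      y = ∑ i, c i • (fun j => ((D.A i j : ℝ))) := by
    intro y
    have : y ∈ {y : Fin n → ℝ | ∃ c : Fin m → ℝ, (∀ i, 0 ≤ c i) ∧ (∀ i ∉ I, c i = 0) ∧
        y = ∑ i, c i • (fun j => ((D.A i j : ℝ)))} := by
      rw [hmain]
      intro v hv
      rw [hcoreq, vectorSpan_singleton, Submodule.mem_bot] at hv
      subst hv
      simp
    exact this
  choose cp hp0 hpI hpe using fun j : Fin n => hall (Pi.single j 1)
  choose cn hn0 hnI hne2 using fun j : Fin n => hall (-Pi.single j 1)
  -- the key lower bound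
  have key : ∀ (c : Fin m → ℝ), (∀ i, 0 ≤ c i) → (∀ i ∉ I, c i = 0) →
      ∀ (u : Fin n → ℝ), u = ∑ i, c i • (fun j => ((D.A i j : ℝ))) →
      ∀ y : Fin n → ℝ, (∀ i ∈ I, 0 ≤ D.dF i y) →
      ∑ i, c i * (D.b i : ℝ) ≤ ∑ j, u j * y j := by
    intro c hc0 hcI u hu y hyS
    have hcalc : ∑ j, u j * y j = ∑ i, c i * ipair (D.A i) y := by
      subst hu
      have happ : ∀ j, (∑ i, c i • (fun j' => ((D.A i j' : ℝ)))) j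
          = ∑ i, c i * (D.A i j : ℝ) := by
        intro j
        simp [Finset.sum_apply]
      calc ∑ j, (∑ i, c i • (fun j' => ((D.A i j' : ℝ)))) j * y j
          = ∑ j, ∑ i, c i * (D.A i j : ℝ) * y j := by
            refine Finset.sum_congr rfl fun j _ => ?_
            rw [happ, Finset.sum_mul]
        _ = ∑ i, ∑ j, c i * (D.A i j : ℝ) * y j := Finset.sum_comm
        _ = ∑ i, c i * ipair (D.A i) y := by
            refine Finset.sum_congr rfl fun i _ => ?_
            rw [ipair, Finset.mul_sum]
            exact Finset.sum_congr rfl fun j _ => by ring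
    rw [hcalc]
    refine Finset.sum_le_sum fun i _ => ?_
    by_cases hiI : i ∈ I
    · have h1 : (D.b i : ℝ) ≤ ipair (D.A i) y := by
        have := hyS i hiI
        simp only [PolyDesc.dF] at this
        linarith
      exact mul_le_mul_of_nonneg_left h1 (hc0 i)
    · rw [hcI i hiI, zero_mul, zero_mul]
  -- bounds on the coordinates
  set SB : Set (Fin n → ℝ) := {y : Fin n → ℝ | ∀ i ∈ I, 0 ≤ D.dF i y} with hSB
  set L : Fin n → ℝ := fun j => ∑ i, cp j i * (D.b i : ℝ) with hL
  set N : Fin n → ℝ := fun j => ∑ i, cn j i * (D.b i : ℝ) with hN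
  set R : ℝ := ∑ j, (|L j| + |N j|) with hR
  have hR0 : 0 ≤ R := Finset.sum_nonneg fun j _ => by positivity
  have hbound : ∀ y ∈ SB, ∀ j, |y j| ≤ R := by
    intro y hy j
    have h1 : L j ≤ ∑ j', (Pi.single j 1 : Fin n → ℝ) j' * y j' :=
      key (cp j) (hp0 j) (hpI j) _ (hpe j) y hy
    have h2 : N j ≤ ∑ j', (-Pi.single j 1 : Fin n → ℝ) j' * y j' :=
      key (cn j) (hn0 j) (hnI j) _ (hne2 j) y hy
    have e1 : ∑ j', (Pi.single j 1 : Fin n → ℝ) j' * y j' = y j := by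
      simp [Pi.single_apply, ite_mul, Finset.sum_ite_eq]
    have e2 : ∑ j', (-Pi.single j 1 : Fin n → ℝ) j' * y j' = -y j := by
      simp [Pi.single_apply, ite_mul, Finset.sum_ite_eq]
    rw [e1] at h1
    rw [e2] at h2
    have habs : |y j| ≤ |L j| + |N j| := by
      rw [abs_le]
      constructor
      · have := neg_abs_le (L j)
        have := abs_nonneg (N j)
        linarith
      · have := neg_abs_le (N j)
        have := abs_nonneg (L j)
        linarith
    refine habs.trans ?_
    exact Finset.single_le_sum (f := fun j => |L j| + |N j|)
      (fun j _ => by positivity) (Finset.mem_univ j)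
  constructor
  · refine (Metric.isBounded_closedBall (x := (0 : Fin n → ℝ)) (r := R)).subset ?_
    intro y hy
    rw [Metric.mem_closedBall, dist_zero_right,
      pi_norm_le_iff_of_nonneg hR0]
    intro j
    rw [Real.norm_eq_abs]
    exact hbound y hy j
  · intro y hy i _
    simp only [PolyDesc.dF]
    have := hy i
    linarith

end
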